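/- Let P, Q ∈ SYT(r×c), n = rc, S = stack(P,Q), with x_{ij} the entry in row i, column j of Q, y_{ij} the entry in row i, column j of ∂(P), S_k := {(x_{sj}, y_{tj}) : 1 ≤ j ≤ c, 1 ≤ s,t ≤ r, s+t−1 = k} for 1 ≤ k ≤ 2r−1, and S_0 = S_{2r} := ∅. Then for r ≤ k ≤ 2r−1 the skeleton satisfies 𝒮(S_k, ↗) = S_{k+1}, and for 1 ≤ k ≤ r the skeleton satisfies 𝒮(S_k, ↙) = S_{k−1}. -/
import Mathlib


namespace PromRS

/-! ## Rectangular standard Young tableaux (as functions; 0-indexed cells; entries 1..R*C) -/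

/-- `T` is a standard Young tableau of rectangular shape with `R` rows and `C` columns:
rows and columns strictly increase, and the entries on the `R × C` rectangle are a
bijection onto `{1, …, R*C}`. -/
def IsSYT (R C : ℕ) (T : ℕ → ℕ → ℕ) : Prop :=
  (∀ i j, i < R → j + 1 < C → T i j < T i (j + 1)) ∧
  (∀ i j, i + 1 < R → j < C → T i j < T (i + 1) j) ∧
  Set.BijOn (fun p : ℕ × ℕ => T p.1 p.2) {p : ℕ × ℕ | p.1 < R ∧ p.2 < C} (Set.Icc 1 (R * C))

/-- Stacking: add `r*c` to every entry of `Q` and place the result below `P`. -/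
def stack (r c : ℕ) (P Q : ℕ → ℕ → ℕ) : ℕ → ℕ → ℕ := fun i j =>
  if i < r then P i j else Q (i - r) j + r * c

/-! ## Gromotion and promotion permutations -/

/-- Value of `T` at a cell, with `⊤` outside the `R × C` rectangle. -/
def ext (R C : ℕ) (T : ℕ → ℕ → ℕ) (p : ℕ × ℕ) : WithTop ℕ :=
  if p.1 < R ∧ p.2 < C then ((T p.1 p.2 : ℕ) : WithTop ℕ) else ⊤

/-- The jeu de taquin slide moves the empty cell to the smaller of its east/south neighbors. -/
def nextCell (R C : ℕ) (T : ℕ → ℕ → ℕ) (p : ℕ × ℕ) : ℕ × ℕ :=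
  if ext R C T (p.1, p.2 + 1) < ext R C T (p.1 + 1, p.2) then (p.1, p.2 + 1)
  else (p.1 + 1, p.2)

/-- The sliding path of the empty cell, starting at the top-left corner. -/
def slidePath (R C : ℕ) (T : ℕ → ℕ → ℕ) : ℕ → ℕ × ℕ
  | 0 => (0, 0)
  | k + 1 => nextCell R C T (slidePath R C T k)

def maxEntry (R C : ℕ) (T : ℕ → ℕ → ℕ) : ℕ :=
  ((Finset.range R) ×ˢ (Finset.range C)).sup fun p => T p.1 p.2

/-- Gromotion: delete the minimal entry (at the top-left corner), rectify by jeu de taquin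
slides, and fill the vacated outer corner with (current maximum) + 1; entries are not
decremented. -/
def gromotion (R C : ℕ) (T : ℕ → ℕ → ℕ) : ℕ → ℕ → ℕ := fun i j =>
  if i = R - 1 ∧ j = C - 1 then maxEntry R C T + 1
  else
    match (List.range (R + C - 2)).find? (fun k => decide (slidePath R C T k = (i, j))) with
    | some k => T (slidePath R C T (k + 1)).1 (slidePath R C T (k + 1)).2
    | none => T i j

/-- The entry that slides (up) into row `i` (1-indexed) during one gromotion slide of `T`:
the value of `T` at the first cell of the sliding path lying in 0-indexed row `i`. -/
def slideInto (R C : ℕ) (T : ℕ → ℕ → ℕ) (i : ℕ) : ℕ :=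
  match (List.range (R + C - 1)).find? (fun k => decide ((slidePath R C T k).1 = i)) with
  | some k => T (slidePath R C T k).1 (slidePath R C T k).2
  | none => 0

/-- The `i`-th promotion permutation of `T ∈ SYT(R × C)`: its value at `j` is the entry
that slides into row `i` when computing `gromotion^j(T)`, taken modulo `R*C` with
residues in `{1, …, R*C}`. -/
def promPerm (R C : ℕ) (T : ℕ → ℕ → ℕ) (i : ℕ) : ℕ → ℕ := fun j =>
  (slideInto R C ((gromotion R C)^[j - 1] T) i - 1) % (R * C) + 1

/-! ## Tableaux as lists of rows, Robinson–Schensted insertion -/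

/-- Entry of a list-of-rows tableau (0-indexed; `0` outside). -/
def entryL (T : List (List ℕ)) (i j : ℕ) : ℕ := (T.getD i []).getD j 0

/-- Convert a function tableau on an `R × C` rectangle to a list of rows. -/
def toListT (R C : ℕ) (T : ℕ → ℕ → ℕ) : List (List ℕ) :=
  (List.range R).map fun i => (List.range C).map fun j => T i j

/-- Transpose (conjugate) of a list-of-rows tableau. -/
def transposeT (T : List (List ℕ)) : List (List ℕ) :=
  (List.range (T.getD 0 []).length).map fun j => T.filterMap fun row => row[j]?

/-- Shape (row lengths) of a list-of-rows tableau. -/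
def shapeL (T : List (List ℕ)) : List ℕ := T.map List.length

/-- Standard Young tableau, as a list of rows: weakly decreasing nonempty row lengths,
rows and columns strictly increasing, and entries exactly `{1, …, N}` where `N` is the
number of cells. -/
def IsSYTList (T : List (List ℕ)) : Prop :=
  (∀ i, i + 1 < T.length → (T.getD (i + 1) []).length ≤ (T.getD i []).length) ∧
  (∀ row ∈ T, row ≠ []) ∧
  (∀ i j, i < T.length → j + 1 < (T.getD i []).length → entryL T i j < entryL T i (j + 1)) ∧
  (∀ i j, i + 1 < T.length → j < (T.getD (i + 1) []).length →
    entryL T i j < entryL T (i + 1) j) ∧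
  T.flatten.Nodup ∧ (∀ m, m ∈ T.flatten ↔ 1 ≤ m ∧ m ≤ T.flatten.length)

/-- Schensted row insertion of `x` into a tableau. -/
def rowInsert : List (List ℕ) → ℕ → List (List ℕ)
  | [], x => [[x]]
  | r :: rs, x =>
    match r.dropWhile (fun y => decide (y < x)) with
    | [] => (r ++ [x]) :: rs
    | y :: bs => (r.takeWhile (fun y => decide (y < x)) ++ x :: bs) :: rowInsert rs y

/-- The (0-indexed) row where the shape grew when passing from `P` to `P'`. -/
def rowOfNewCell (P P' : List (List ℕ)) : ℕ :=
  ((List.range P'.length).find? fun i =>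
    decide ((P'.getD i []).length ≠ (P.getD i []).length)).getD 0

def placeInRow (Q : List (List ℕ)) (r k : ℕ) : List (List ℕ) :=
  if r < Q.length then Q.set r (Q.getD r [] ++ [k]) else Q ++ [[k]]

/-- The Robinson–Schensted correspondence: the pair (insertion tableau, recording tableau)
of a word. -/
def RS (w : List ℕ) : List (List ℕ) × List (List ℕ) :=
  (List.range w.length).foldl
    (fun PQ i =>
      let P' := rowInsert PQ.1 (w.getD i 0)
      (P', placeInRow PQ.2 (rowOfNewCell PQ.1 P') (i + 1)))
    ([], [])

/-! ## Jeu de taquin on list tableaux; evacuation -/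

def extL (T : List (List ℕ)) (p : ℕ × ℕ) : WithTop ℕ :=
  if p.2 < (T.getD p.1 []).length then ((entryL T p.1 p.2 : ℕ) : WithTop ℕ) else ⊤

def nextCellL (T : List (List ℕ)) (p : ℕ × ℕ) : ℕ × ℕ :=
  if extL T (p.1, p.2 + 1) = ⊤ ∧ extL T (p.1 + 1, p.2) = ⊤ then p
  else if extL T (p.1, p.2 + 1) < extL T (p.1 + 1, p.2) then (p.1, p.2 + 1)
  else (p.1 + 1, p.2)

def jdtPath (T : List (List ℕ)) : ℕ → ℕ × ℕ
  | 0 => (0, 0)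
  | k + 1 => nextCellL T (jdtPath T k)

/-- The outer corner vacated when the minimal entry of `T` is deleted and the tableau is
rectified by jeu de taquin slides. -/
def vacated (T : List (List ℕ)) : ℕ × ℕ := jdtPath T T.flatten.length

/-- The value at cell `(i, j)` after the rectification slide. -/
def slidValue (T : List (List ℕ)) (i j : ℕ) : ℕ :=
  match (List.range T.flatten.length).find? (fun k =>
      decide (jdtPath T k = (i, j) ∧ jdtPath T (k + 1) ≠ (i, j))) with
  | some k => entryL T (jdtPath T (k + 1)).1 (jdtPath T (k + 1)).2
  | none => entryL T i j

/-- Delete the minimal entry of `T` and rectify. -/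
def delta (T : List (List ℕ)) : List (List ℕ) :=
  ((List.range T.length).map fun i =>
    (List.range ((T.getD i []).length - if i = (vacated T).1 then 1 else 0)).map fun j =>
      slidValue T i j).filter fun row => decide (row ≠ [])

/-- The entry of the evacuation `∂T` at cell `(i,j)`: `n + 1 - k` where the `k`-th
deletion-rectification vacates `(i,j)`. -/
def evacEntry (T : List (List ℕ)) (i j : ℕ) : ℕ :=
  match (List.range T.flatten.length).find? (fun k =>
      decide (vacated (delta^[k] T) = (i, j))) with
  | some k => T.flatten.length - k
  | none => 0

/-- Schützenberger evacuation `∂T` of a standard Young tableau. -/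
def evacL (T : List (List ℕ)) : List (List ℕ) :=
  (List.range T.length).map fun i =>
    (List.range (T.getD i []).length).map fun j => evacEntry T i j

/-! ## Shadow lines, skeleta, and Viennot's construction -/

def dirNE (a b : ℤ × ℤ) : Prop := a.1 ≤ b.1 ∧ a.2 ≤ b.2
def dirSE (a b : ℤ × ℤ) : Prop := a.1 ≤ b.1 ∧ b.2 ≤ a.2
def dirSW (a b : ℤ × ℤ) : Prop := b.1 ≤ a.1 ∧ b.2 ≤ a.2
def dirNW (a b : ℤ × ℤ) : Prop := b.1 ≤ a.1 ∧ a.2 ≤ b.2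

def minimalsUnder (d : ℤ × ℤ → ℤ × ℤ → Prop) (P : Set (ℤ × ℤ)) : Set (ℤ × ℤ) :=
  {p ∈ P | ∀ q ∈ P, d q p → q = p}

/-- `P` minus its first `j` shadow lines. -/
def shadowRest (d : ℤ × ℤ → ℤ × ℤ → Prop) (P : Set (ℤ × ℤ)) : ℕ → Set (ℤ × ℤ)
  | 0 => P
  | j + 1 => shadowRest d P j \ minimalsUnder d (shadowRest d P j)

/-- The `j`-th shadow line of `P` (1-indexed `j`). -/
def shadowLine (d : ℤ × ℤ → ℤ × ℤ → Prop) (P : Set (ℤ × ℤ)) (j : ℕ) : Set (ℤ × ℤ) :=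
  minimalsUnder d (shadowRest d P (j - 1))

/-- The skeleton of a single shadow line `L`: the minimal elements of the set of points
covered by the shadows of at least two points of `L`. -/
def lineSkeleton (d : ℤ × ℤ → ℤ × ℤ → Prop) (L : Set (ℤ × ℤ)) : Set (ℤ × ℤ) :=
  minimalsUnder d {x | ∃ p ∈ L, ∃ q ∈ L, p ≠ q ∧ d p x ∧ d q x}

/-- The skeleton of `P`: the union of the skeleta of its shadow lines. -/
def skeleton (d : ℤ × ℤ → ℤ × ℤ → Prop) (P : Set (ℤ × ℤ)) : Set (ℤ × ℤ) :=
  ⋃ j : ℕ, lineSkeleton d (shadowLine d P (j + 1))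

/-- The `k`-th iterated skeleton of `P`. -/
def skeletonIter (d : ℤ × ℤ → ℤ × ℤ → Prop) (P : Set (ℤ × ℤ)) (k : ℕ) : Set (ℤ × ℤ) :=
  (skeleton d)^[k] P

def IsMinSnd (L : Set (ℤ × ℤ)) (y : ℤ) : Prop := (∃ p ∈ L, p.2 = y) ∧ ∀ p ∈ L, y ≤ p.2
def IsMaxSnd (L : Set (ℤ × ℤ)) (y : ℤ) : Prop := (∃ p ∈ L, p.2 = y) ∧ ∀ p ∈ L, p.2 ≤ y
def IsMinFst (L : Set (ℤ × ℤ)) (x : ℤ) : Prop := (∃ p ∈ L, p.1 = x) ∧ ∀ p ∈ L, x ≤ p.1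
def IsMaxFst (L : Set (ℤ × ℤ)) (x : ℤ) : Prop := (∃ p ∈ L, p.1 = x) ∧ ∀ p ∈ L, p.1 ≤ x

/-- The set of exit coordinates (specified by `spec`) of the shadow lines of the `i`-th
iterated skeleton of `P` in direction `d`. -/
def exitSet (spec : Set (ℤ × ℤ) → ℤ → Prop) (d : ℤ × ℤ → ℤ × ℤ → Prop)
    (P : Set (ℤ × ℤ)) (i : ℕ) : Set ℤ :=
  {v | ∃ j : ℕ, spec (shadowLine d (skeletonIter d P i) (j + 1)) v}

/-- The word read off along one edge in Viennot's construction is the lattice word of the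
standard tableau `T`: there is an enumeration `e` of all shadow-line exit coordinates,
in the order prescribed by `lt`, such that the `m`-th exit belongs to a shadow line of the
`i`-th iterated skeleton exactly when the entry `m` of `T` lies in row `i + 1`. -/
def ReadsWord (spec : Set (ℤ × ℤ) → ℤ → Prop) (lt : ℤ → ℤ → Prop)
    (d : ℤ × ℤ → ℤ × ℤ → Prop) (P : Set (ℤ × ℤ)) (T : List (List ℕ)) : Prop :=
  ∃ e : Fin T.flatten.length → ℤ,
    (∀ a b : Fin T.flatten.length, a < b → lt (e a) (e b)) ∧
    (Set.range e = ⋃ i : ℕ, exitSet spec d P i) ∧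
    ∀ (m : Fin T.flatten.length) (i : ℕ), e m ∈ exitSet spec d P i →
      (T.findIdx fun row => row.contains (m.1 + 1)) + 1 = i + 1

/-- `𝒱(𝒫, ↗) = (Pt, Qt)`: the P-word is read bottom-to-top along the right edge
(east exit heights, which are the minimal `y`-coordinates of the lines), the Q-word
left-to-right along the top edge (north exits at minimal `x`-coordinates). -/
def ViennotNE (P : Set (ℤ × ℤ)) (Pt Qt : List (List ℕ)) : Prop :=
  ReadsWord IsMinSnd (· < ·) dirNE P Pt ∧ ReadsWord IsMinFst (· < ·) dirNE P Qt

/-- `𝒱(𝒫, ↘) = (Pt, Qt)`: P-word left-to-right along the bottom edge, Q-word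
top-to-bottom along the right edge. -/
def ViennotSE (P : Set (ℤ × ℤ)) (Pt Qt : List (List ℕ)) : Prop :=
  ReadsWord IsMinFst (· < ·) dirSE P Pt ∧ ReadsWord IsMaxSnd (· > ·) dirSE P Qt

/-- `𝒱(𝒫, ↙) = (Pt, Qt)`: P-word bottom-to-top along the left edge, Q-word
right-to-left along the bottom edge. -/
def ViennotSW (P : Set (ℤ × ℤ)) (Pt Qt : List (List ℕ)) : Prop :=
  ReadsWord IsMaxSnd (· < ·) dirSW P Pt ∧ ReadsWord IsMaxFst (· > ·) dirSW P Qt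

/-- `𝒱(𝒫, ↖) = (Pt, Qt)`: P-word right-to-left along the top edge, Q-word
bottom-to-top along the left edge. -/
def ViennotNW (P : Set (ℤ × ℤ)) (Pt Qt : List (List ℕ)) : Prop :=
  ReadsWord IsMaxFst (· > ·) dirNW P Pt ∧ ReadsWord IsMinSnd (· < ·) dirNW P Qt

/-- The point set `𝒫^NE(ρ)` of the northeast `n × n` block of the permutation matrix of
`ρ ∈ S_{2n}`, in Cartesian coordinates. -/
def pointsNE (n : ℕ) (f : ℕ → ℕ) : Set (ℤ × ℤ) :=
  {p | ∃ x : ℕ, 1 ≤ x ∧ x ≤ n ∧ n < f x ∧ p = ((f x : ℤ) - n, (n : ℤ) + 1 - x)}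

/-! ## Crossings and nestings of perfect matchings -/

/-- The matching `{a, f a}` on `{1, …, N}` has a `k`-crossing:
blocks `{a₁ < b₁}, …, {a_k < b_k}` with `a₁ < ⋯ < a_k < b₁ < ⋯ < b_k`. -/
def HasCrossing (f : ℕ → ℕ) (N k : ℕ) : Prop :=
  ∃ a b : Fin k → ℕ, StrictMono a ∧ StrictMono b ∧
    (∀ m, 1 ≤ a m ∧ b m ≤ N ∧ f (a m) = b m ∧ a m < b m) ∧
    ∀ m m' : Fin k, a m < b m'

/-- The matching `{a, f a}` on `{1, …, N}` has a `k`-nesting: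
blocks `{a₁ < b₁}, …, {a_k < b_k}` with `a₁ < ⋯ < a_k < b_k < ⋯ < b₁`. -/
def HasNesting (f : ℕ → ℕ) (N k : ℕ) : Prop :=
  ∃ a b : Fin k → ℕ, StrictMono a ∧ StrictAnti b ∧
    (∀ m, 1 ≤ a m ∧ b m ≤ N ∧ f (a m) = b m ∧ a m < b m) ∧
    ∀ m m' : Fin k, a m < b m'

/-! ## Local rules, the promotion–evacuation diagram, and the promotion matrix -/

/-- Partitions are encoded as lists of row lengths (fixed length, padded by zeros). -/
def sortDesc (l : List ℕ) : List ℕ := List.insertionSort (· ≥ ·) l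

/-- The sequence `ν + κ - λ` (pointwise). -/
def ruleSeq (lam nu ka : List ℕ) : List ℕ :=
  List.zipWith (fun a b => a - b) (List.zipWith (· + ·) nu ka) lam

/-- The local rule: `μ = sort(ν + κ - λ)`. -/
def localRule (lam nu ka : List ℕ) : List ℕ := sortDesc (ruleSeq lam nu ka)

/-- The decoration of a local rule square: `i` if `ν + κ - λ` fails to be sorted at rows
`i, i+1` (1-indexed), and `0` if no decoration is present. -/
def decoration (lam nu ka : List ℕ) : ℕ :=
  match (List.range (ruleSeq lam nu ka).length).find? (fun i =>
      decide ((ruleSeq lam nu ka).getD i 0 < (ruleSeq lam nu ka).getD (i + 1) 0)) with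
  | some i => i + 1
  | none => 0

/-- Fill in the next row of the promotion–evacuation diagram from the previous row `prev`:
the new row starts with the empty partition at position `s` and continues by local rules. -/
def nextRow (R : ℕ) (prev : ℕ → List ℕ) (s : ℕ) : ℕ → List ℕ
  | 0 => List.replicate R 0
  | x + 1 =>
    if x + 1 ≤ s then List.replicate R 0
    else localRule (prev x) (prev (x + 1)) (nextRow R prev s x)

/-- The `j`-th row of the promotion–evacuation diagram of `T ∈ SYT(R × C)`, as a function
of the column index (row `0` is the chain of `T`). -/
def PErow (R C : ℕ) (T : ℕ → ℕ → ℕ) : ℕ → ℕ → List ℕ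
  | 0 => fun x => (List.range R).map fun i =>
      ((Finset.range C).filter fun j => T i j ≤ min x (R * C)).card
  | j + 1 => nextRow R (PErow R C T j) (j + 1)

/-- For `S = stack(P, Q) ∈ SYT(2r × c)` and `n = r*c`, the `(n+1) × (n+1)` northeast block
of partitions `λ(x, y)` of `PEdiagram(S)` (Cartesian coordinates): `λ(x,y)` is the
diagram entry in row `n - y`, column `n + x`. -/
def lamBlock (r c : ℕ) (S : ℕ → ℕ → ℕ) (x y : ℕ) : List ℕ :=
  PErow (2 * r) c S (r * c - y) (r * c + x)

/-- The entry of `PM(S)^NE` at Cartesian coordinates `(x, y)`, `1 ≤ x, y ≤ n`: the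
decoration of the local rule square with corners `λ(x-1, y-1)`, `λ(x-1, y)`, `λ(x, y-1)`,
`λ(x, y)`. -/
def PMNE (r c : ℕ) (S : ℕ → ℕ → ℕ) (x y : ℕ) : ℕ :=
  decoration (lamBlock r c S (x - 1) y) (lamBlock r c S x y) (lamBlock r c S (x - 1) (y - 1))

/-- Chain of partitions of a list tableau: shape of the entries `≤ m`. -/
def chainOfL (T : List (List ℕ)) (m : ℕ) : List ℕ :=
  T.map fun row => (row.filter fun a => decide (a ≤ m)).length

/-- Column height `#{i : j < l i}` of a partition. -/
def colHeight (l : List ℕ) (j : ℕ) : ℕ := (l.filter fun a => decide (j < a)).length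

/-- Vertical sum `l +' m` of two partitions (stack the columns of `m` onto those of `l`),
computed inside a `rows × cols` bounding box. -/
def vsum (rows cols : ℕ) (l m : List ℕ) : List ℕ :=
  (List.range rows).map fun i =>
    ((List.range cols).filter fun j => decide (i < colHeight l j + colHeight m j)).length

/-! ## The point sets `S_k` and `S_{kj}` -/

/-- `x_{sj}`: the entry of `Q` in row `s`, column `j` (1-indexed). -/
def xEnt (Q : ℕ → ℕ → ℕ) (s j : ℕ) : ℤ := (Q (s - 1) (j - 1) : ℤ)

/-- `y_{tj}`: the entry of `∂(P)` in row `t`, column `j` (1-indexed). -/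
def yEnt (r c : ℕ) (P : ℕ → ℕ → ℕ) (t j : ℕ) : ℤ :=
  (entryL (evacL (toListT r c P)) (t - 1) (j - 1) : ℤ)

def Skj (r c : ℕ) (P Q : ℕ → ℕ → ℕ) (k j : ℕ) : Set (ℤ × ℤ) :=
  {p | ∃ s t : ℕ, 1 ≤ s ∧ s ≤ r ∧ 1 ≤ t ∧ t ≤ r ∧ s + t - 1 = k ∧
    p = (xEnt Q s j, yEnt r c P t j)}

def Sk (r c : ℕ) (P Q : ℕ → ℕ → ℕ) (k : ℕ) : Set (ℤ × ℤ) :=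
  ⋃ j ∈ Set.Icc 1 c, Skj r c P Q k j

/-- A southeast chain of `k` ones in the matrix `U` (rows increase, columns increase),
contained in a rectangle that fully fits into the strictly upper triangular part of the
`N × N` matrix. -/
def HasSEChain (U : ℕ → ℕ → ℕ) (N k : ℕ) : Prop :=
  ∃ a b : Fin k → ℕ, StrictMono a ∧ StrictMono b ∧ (∀ m, U (a m) (b m) = 1) ∧
    ∃ r₁ r₂ c₁ c₂ : ℕ, 1 ≤ r₁ ∧ r₂ < c₁ ∧ c₂ ≤ N ∧
      ∀ m, r₁ ≤ a m ∧ a m ≤ r₂ ∧ c₁ ≤ b m ∧ b m ≤ c₂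

/-- A southwest chain of `k` ones in the matrix `U` (rows increase, columns decrease),
contained in a rectangle that fully fits into the strictly upper triangular part of the
`N × N` matrix. -/
def HasSWChain (U : ℕ → ℕ → ℕ) (N k : ℕ) : Prop :=
  ∃ a b : Fin k → ℕ, StrictMono a ∧ StrictAnti b ∧ (∀ m, U (a m) (b m) = 1) ∧
    ∃ r₁ r₂ c₁ c₂ : ℕ, 1 ≤ r₁ ∧ r₂ < c₁ ∧ c₂ ≤ N ∧
      ∀ m, r₁ ≤ a m ∧ a m ≤ r₂ ∧ c₁ ≤ b m ∧ b m ≤ c₂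

/-! ### Auxiliary development -/

lemma getD_map_range {α : Type*} (f : ℕ → α) (n i : ℕ) (d : α) :
    ((List.range n).map f).getD i d = if i < n then f i else d := by
  split <;> rename_i h
  · rw [List.getD_eq_getElem _ _ (by simpa using h)]
    simp
  · rw [List.getD_eq_default]
    simpa using h

lemma list_sum_eq_sum_range (l : List ℕ) :
    l.sum = ∑ i ∈ Finset.range l.length, l.getD i 0 := by
  induction l with
  | nil => simp
  | cons a t ih =>
    rw [List.sum_cons, ih, List.length_cons, Finset.sum_range_succ']
    simp [List.getD]
    omega

/-- Row length function of a list-of-rows tableau. -/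
def LL (T : List (List ℕ)) (i : ℕ) : ℕ := (T.getD i []).length

/-- The shape invariant needed for the jeu-de-taquin analysis. -/
def Goodsh (T : List (List ℕ)) : Prop :=
  (∀ i, LL T (i + 1) ≤ LL T i) ∧ (∀ i, i < T.length → 0 < LL T i)

lemma LL_pos_lt {T : List (List ℕ)} {i : ℕ} (h : 0 < LL T i) : i < T.length := by
  by_contra hc
  rw [LL, List.getD_eq_default _ _ (by omega)] at h
  simp at h

lemma LL_anti {T : List (List ℕ)} (hG : Goodsh T) {i j : ℕ} (h : i ≤ j) :
    LL T j ≤ LL T i := by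
  induction j, h using Nat.le_induction with
  | base => exact le_rfl
  | succ n hn ih => exact le_trans (hG.1 n) ih

lemma flatten_len (T : List (List ℕ)) :
    T.flatten.length = ∑ i ∈ Finset.range T.length, LL T i := by
  rw [List.length_flatten, list_sum_eq_sum_range, List.length_map]
  refine Finset.sum_congr rfl fun i hi => ?_
  rw [Finset.mem_range] at hi
  rw [List.getD_eq_getElem _ _ (by simpa using hi), List.getElem_map, LL,
    List.getD_eq_getElem _ _ hi]

lemma LL_le_flatten (T : List (List ℕ)) (i : ℕ) : LL T i ≤ T.flatten.length := by
  by_cases h : i < T.length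
  · rw [flatten_len]
    exact Finset.single_le_sum (f := fun i => LL T i) (fun _ _ => Nat.zero_le _)
      (Finset.mem_range.mpr h)
  · rw [LL, List.getD_eq_default _ _ (by omega)]
    simp

lemma extL_eq_top (T : List (List ℕ)) (a b : ℕ) : extL T (a, b) = ⊤ ↔ LL T a ≤ b := by
  show (if b < (T.getD a []).length then ((entryL T a b : ℕ) : WithTop ℕ) else ⊤) = ⊤ ↔
    (T.getD a []).length ≤ b
  split <;> rename_i h
  · constructor
    · intro hh; exact absurd hh WithTop.coe_ne_top
    · intro hh; omega
  · constructor
    · intro _; omega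
    · intro _; rfl

lemma jdtPath_succ (T : List (List ℕ)) (k : ℕ) :
    jdtPath T (k + 1) = nextCellL T (jdtPath T k) := rfl

lemma nextCellL_cases (T : List (List ℕ)) (p : ℕ × ℕ) :
    nextCellL T p = p ∨
    (nextCellL T p = (p.1, p.2 + 1) ∧ p.2 + 1 < LL T p.1) ∨
    (nextCellL T p = (p.1 + 1, p.2) ∧ p.2 < LL T (p.1 + 1)) := by
  unfold nextCellL
  split
  · left; rfl
  · rename_i hb
    split <;> rename_i hlt
    · right; left
      refine ⟨rfl, ?_⟩
      have hne : extL T (p.1, p.2 + 1) ≠ ⊤ := ne_top_of_lt hlt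
      rw [Ne, extL_eq_top] at hne
      omega
    · right; right
      refine ⟨rfl, ?_⟩
      have hS : extL T (p.1 + 1, p.2) ≠ ⊤ := by
        intro hS
        have hE : extL T (p.1, p.2 + 1) ≠ ⊤ := fun h => hb ⟨h, hS⟩
        exact hlt (hS ▸ lt_top_iff_ne_top.mpr hE)
      rw [Ne, extL_eq_top] at hS
      omega

lemma nextCellL_eq_self_iff (T : List (List ℕ)) (p : ℕ × ℕ) :
    nextCellL T p = p ↔ (extL T (p.1, p.2 + 1) = ⊤ ∧ extL T (p.1 + 1, p.2) = ⊤) := by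
  constructor
  · intro h
    by_contra hb
    unfold nextCellL at h
    rw [if_neg hb] at h
    split at h
    · have := congrArg Prod.snd h; simp at this
    · have := congrArg Prod.fst h; simp at this
  · intro h
    unfold nextCellL
    rw [if_pos h]

lemma jdtPath_inS {T : List (List ℕ)} (hG : Goodsh T) (hT : 0 < T.flatten.length) :
    ∀ k, (jdtPath T k).2 < LL T (jdtPath T k).1 := by
  intro k
  induction k with
  | zero =>
    show (0 : ℕ) < LL T 0
    by_contra h
    have h0 : ∀ i, LL T i = 0 := by
      intro i
      have := LL_anti hG (Nat.zero_le i)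
      omega
    rw [flatten_len] at hT
    rw [Finset.sum_eq_zero (fun i _ => h0 i)] at hT
    omega
  | succ n ih =>
    rcases nextCellL_cases T (jdtPath T n) with h | ⟨h, he⟩ | ⟨h, he⟩ <;>
      rw [jdtPath_succ, h]
    · exact ih
    · exact he
    · exact he

lemma jdtPath_stable {T : List (List ℕ)} {k m : ℕ}
    (h : nextCellL T (jdtPath T k) = jdtPath T k) (hkm : k ≤ m) :
    jdtPath T m = jdtPath T k := by
  induction m, hkm using Nat.le_induction with
  | base => rfl
  | succ n hn ih => rw [jdtPath_succ, ih, h]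

lemma inShape_sum_lt {T : List (List ℕ)} (hG : Goodsh T) {p : ℕ × ℕ}
    (hp : p.2 < LL T p.1) : p.1 + p.2 + 1 ≤ T.flatten.length := by
  have h1 : p.1 < T.length := LL_pos_lt (by omega)
  have h2 : ∀ i ∈ Finset.range (p.1 + 1), p.2 + 1 ≤ LL T i := by
    intro i hi
    rw [Finset.mem_range] at hi
    have := LL_anti hG (show i ≤ p.1 by omega)
    omega
  have h3 : (p.1 + 1) * (p.2 + 1) ≤ ∑ i ∈ Finset.range (p.1 + 1), LL T i := by
    calc (p.1 + 1) * (p.2 + 1) = ∑ _i ∈ Finset.range (p.1 + 1), (p.2 + 1) := by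
          rw [Finset.sum_const, Finset.card_range, smul_eq_mul]
    _ ≤ _ := Finset.sum_le_sum h2
  have h4 : ∑ i ∈ Finset.range (p.1 + 1), LL T i ≤ ∑ i ∈ Finset.range T.length, LL T i := by
    refine Finset.sum_le_sum_of_subset ?_
    intro x hx
    simp only [Finset.mem_range] at *
    omega
  rw [flatten_len]
  nlinarith

lemma vacated_stable {T : List (List ℕ)} (hG : Goodsh T) (hT : 0 < T.flatten.length) :
    nextCellL T (vacated T) = vacated T := by
  by_cases hst : ∃ k, k ≤ T.flatten.length ∧ nextCellL T (jdtPath T k) = jdtPath T k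
  · obtain ⟨k, hk, hs⟩ := hst
    have hNk : jdtPath T T.flatten.length = jdtPath T k := jdtPath_stable hs hk
    show nextCellL T (jdtPath T T.flatten.length) = jdtPath T T.flatten.length
    rw [hNk, hs]
  · push_neg at hst
    exfalso
    have hsum : ∀ k, k ≤ T.flatten.length → (jdtPath T k).1 + (jdtPath T k).2 = k := by
      intro k
      induction k with
      | zero => intro _; rfl
      | succ n ih =>
        intro hk
        rcases nextCellL_cases T (jdtPath T n) with h | ⟨h, _⟩ | ⟨h, _⟩
        · exact absurd h (hst n (by omega))
        · have := ih (by omega)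
          rw [jdtPath_succ, h]
          show (jdtPath T n).1 + ((jdtPath T n).2 + 1) = n + 1
          omega
        · have := ih (by omega)
          rw [jdtPath_succ, h]
          show ((jdtPath T n).1 + 1) + (jdtPath T n).2 = n + 1
          omega
    have h1 := jdtPath_inS hG hT T.flatten.length
    have h2 := inShape_sum_lt hG h1
    have h3 := hsum T.flatten.length le_rfl
    omega

lemma vacated_corner {T : List (List ℕ)} (hG : Goodsh T) (hT : 0 < T.flatten.length) :
    (vacated T).2 + 1 = LL T (vacated T).1 ∧ LL T ((vacated T).1 + 1) ≤ (vacated T).2 := by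
  have hs := vacated_stable hG hT
  rw [nextCellL_eq_self_iff] at hs
  have hin : (vacated T).2 < LL T (vacated T).1 := jdtPath_inS hG hT _
  obtain ⟨hE, hS⟩ := hs
  rw [extL_eq_top] at hE hS
  constructor
  · omega
  · exact hS

lemma delta_LL {T : List (List ℕ)} (hG : Goodsh T) (hT : 0 < T.flatten.length) (i : ℕ) :
    LL (delta T) i = LL T i - (if i = (vacated T).1 then 1 else 0) := by
  obtain ⟨hv1, hv2⟩ := vacated_corner hG hT
  have hvlen : (vacated T).1 < T.length := LL_pos_lt (by omega)
  set F : ℕ → List ℕ := fun a =>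
    (List.range ((T.getD a []).length - if a = (vacated T).1 then 1 else 0)).map
      fun j => slidValue T a j with hF
  have hFlen : ∀ a, (F a).length = LL T a - if a = (vacated T).1 then 1 else 0 := by
    intro a
    rw [hF]
    simp [LL]
  have hdelta : delta T =
      ((List.range T.length).map F).filter fun row => decide (row ≠ []) := rfl
  by_cases h0 : 0 < (vacated T).2
  · have hfil : ((List.range T.length).map F).filter (fun row => decide (row ≠ [])) =
        (List.range T.length).map F := by
      rw [List.filter_eq_self]
      intro row hrow
      rw [List.mem_map] at hrow
      obtain ⟨a, ha, rfl⟩ := hrow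
      rw [List.mem_range] at ha
      simp only [decide_eq_true_eq]
      intro hnil
      have hl := hFlen a
      rw [hnil] at hl
      simp only [List.length_nil] at hl
      by_cases hav : a = (vacated T).1
      · rw [if_pos hav, hav] at hl
        omega
      · rw [if_neg hav] at hl
        have := hG.2 a ha
        omega
    show ((delta T).getD i []).length = _
    rw [hdelta, hfil, getD_map_range]
    split <;> rename_i h
    · exact hFlen i
    · have h1 : LL T i = 0 := by
        rw [LL, List.getD_eq_default _ _ (by omega)]
        rfl
      rw [if_neg (by omega : ¬ i = (vacated T).1)]
      simp [h1]
  · have hv20 : (vacated T).2 = 0 := by omega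
    have hlast : T.length = (vacated T).1 + 1 := by
      by_contra hc
      have := hG.2 ((vacated T).1 + 1) (by omega)
      omega
    have hFv : F (vacated T).1 = [] := by
      have hl := hFlen (vacated T).1
      rw [if_pos rfl] at hl
      have : (F (vacated T).1).length = 0 := by omega
      exact List.length_eq_zero_iff.mp this
    have hmap : (List.range T.length).map F = (List.range (vacated T).1).map F ++ [[]] := by
      rw [hlast, List.range_succ, List.map_append]
      simp [hFv]
    have hfil : delta T = (List.range (vacated T).1).map F := by
      rw [hdelta, hmap, List.filter_append]
      have h1 : List.filter (fun row => decide (row ≠ [])) [([] : List ℕ)] = [] := by simp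
      have h2 : List.filter (fun row => decide (row ≠ []))
          ((List.range (vacated T).1).map F) = (List.range (vacated T).1).map F := by
        rw [List.filter_eq_self]
        intro row hrow
        rw [List.mem_map] at hrow
        obtain ⟨a, ha, rfl⟩ := hrow
        rw [List.mem_range] at ha
        simp only [decide_eq_true_eq]
        intro hnil
        have hl := hFlen a
        rw [hnil] at hl
        simp only [List.length_nil] at hl
        rw [if_neg (by omega)] at hl
        have hanti := LL_anti hG (show a ≤ (vacated T).1 by omega)
        omega
      rw [h1, h2, List.append_nil]
    show ((delta T).getD i []).length = _
    rw [hfil, getD_map_range]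
    split <;> rename_i h
    · rw [hFlen]
    · by_cases hiv : i = (vacated T).1
      · rw [if_pos hiv, hiv]
        simp
        omega
      · have hle : LL T i ≤ LL T ((vacated T).1 + 1) := LL_anti hG (by omega)
        rw [if_neg hiv]
        simp only [List.length_nil]
        omega

lemma delta_rows_ne_nil {T : List (List ℕ)} : ∀ row ∈ delta T, row ≠ [] := by
  intro row hrow
  have hd : delta T =
      ((List.range T.length).map fun a =>
        (List.range ((T.getD a []).length - if a = (vacated T).1 then 1 else 0)).map
          fun j => slidValue T a j).filter fun row => decide (row ≠ []) := rfl
  rw [hd, List.mem_filter] at hrow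
  simpa using hrow.2

lemma delta_goodsh {T : List (List ℕ)} (hG : Goodsh T) (hT : 0 < T.flatten.length) :
    Goodsh (delta T) := by
  obtain ⟨hv1, hv2⟩ := vacated_corner hG hT
  constructor
  · intro i
    rw [delta_LL hG hT, delta_LL hG hT]
    have ha := hG.1 i
    by_cases h1 : i = (vacated T).1
    · rw [if_neg (by omega), if_pos h1, h1]
      rw [h1] at ha
      omega
    · by_cases h2 : i + 1 = (vacated T).1
      · rw [if_pos h2, if_neg h1, h2]
        rw [h2] at ha
        omega
      · rw [if_neg h2, if_neg h1]
        omega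
  · intro i hi
    have hmem : (delta T).getD i [] ∈ delta T := by
      rw [List.getD_eq_getElem _ _ hi]
      exact List.getElem_mem _
    have hne := delta_rows_ne_nil _ hmem
    rw [LL]
    exact List.length_pos_iff.mpr hne

lemma delta_flatten_len {T : List (List ℕ)} (hG : Goodsh T) (hT : 0 < T.flatten.length) :
    (delta T).flatten.length = T.flatten.length - 1 := by
  obtain ⟨hv1, hv2⟩ := vacated_corner hG hT
  have hvlen : (vacated T).1 < T.length := LL_pos_lt (by omega)
  have hd := delta_goodsh hG hT
  have hle : (delta T).length ≤ T.length := by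
    by_contra hc
    have h1 := hd.2 T.length (by omega)
    have h2 := delta_LL hG hT T.length
    have h3 : LL T T.length = 0 := by
      rw [LL, List.getD_eq_default _ _ le_rfl]
      rfl
    omega
  rw [flatten_len, flatten_len]
  have hsub : ∑ i ∈ Finset.range (delta T).length, LL (delta T) i =
      ∑ i ∈ Finset.range T.length, LL (delta T) i := by
    refine Finset.sum_subset (by simp; omega) ?_
    intro x _ hx
    rw [Finset.mem_range] at hx
    push_neg at hx
    rw [LL, List.getD_eq_default _ _ (by omega)]
    rfl
  rw [hsub]
  have hkey : ∀ i ∈ Finset.range T.length,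
      LL (delta T) i + (if i = (vacated T).1 then 1 else 0) = LL T i := by
    intro i _
    rw [delta_LL hG hT]
    by_cases h : i = (vacated T).1
    · rw [if_pos h, h]
      omega
    · rw [if_neg h]
      omega
  have hsum2 : ∑ i ∈ Finset.range T.length, LL (delta T) i +
      ∑ i ∈ Finset.range T.length, (if i = (vacated T).1 then 1 else 0) =
      ∑ i ∈ Finset.range T.length, LL T i := by
    rw [← Finset.sum_add_distrib]
    exact Finset.sum_congr rfl hkey
  have hind : ∑ i ∈ Finset.range T.length, (if i = (vacated T).1 then 1 else 0) = 1 := by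
    rw [Finset.sum_ite_eq' (Finset.range T.length) ((vacated T).1) (fun _ => 1)]
    rw [if_pos (Finset.mem_range.mpr hvlen)]
  omega

lemma iter_goodsh {T : List (List ℕ)} (hG : Goodsh T) :
    ∀ k, k ≤ T.flatten.length →
      Goodsh (delta^[k] T) ∧ (delta^[k] T).flatten.length = T.flatten.length - k := by
  intro k
  induction k with
  | zero => intro _; exact ⟨hG, rfl⟩
  | succ n ih =>
    intro h
    obtain ⟨hg, hlen⟩ := ih (by omega)
    have hpos : 0 < (delta^[n] T).flatten.length := by omega
    rw [Function.iterate_succ_apply']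
    refine ⟨delta_goodsh hg hpos, ?_⟩
    rw [delta_flatten_len hg hpos, hlen]
    omega

lemma LL_iter_succ {T : List (List ℕ)} (hG : Goodsh T) {k : ℕ}
    (hk : k < T.flatten.length) (i : ℕ) :
    LL (delta^[k + 1] T) i =
      LL (delta^[k] T) i - (if i = (vacated (delta^[k] T)).1 then 1 else 0) := by
  obtain ⟨hg, hlen⟩ := iter_goodsh hG k (by omega)
  rw [Function.iterate_succ_apply']
  exact delta_LL hg (by omega) i

lemma LL_iter_anti {T : List (List ℕ)} (hG : Goodsh T) (i : ℕ) :
    ∀ {k m : ℕ}, k ≤ m → m ≤ T.flatten.length →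
      LL (delta^[m] T) i ≤ LL (delta^[k] T) i := by
  intro k m hkm
  induction m, hkm using Nat.le_induction with
  | base => intro _; exact le_rfl
  | succ n hn ih =>
    intro hB
    have hstep := LL_iter_succ hG (k := n) (by omega) i
    have := ih (by omega)
    split at hstep <;> omega

lemma LL_iter_final {T : List (List ℕ)} (hG : Goodsh T) (i : ℕ) :
    LL (delta^[T.flatten.length] T) i = 0 := by
  obtain ⟨hg, hlen⟩ := iter_goodsh hG T.flatten.length le_rfl
  have h1 := LL_le_flatten (delta^[T.flatten.length] T) i
  omega

lemma vacated_corner_iter {T : List (List ℕ)} (hG : Goodsh T) {k : ℕ}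
    (hk : k < T.flatten.length) :
    (vacated (delta^[k] T)).2 + 1 = LL (delta^[k] T) (vacated (delta^[k] T)).1 ∧
    LL (delta^[k] T) ((vacated (delta^[k] T)).1 + 1) ≤ (vacated (delta^[k] T)).2 := by
  obtain ⟨hg, hlen⟩ := iter_goodsh hG k (by omega)
  exact vacated_corner hg (by omega)

lemma vac_time_exists {T : List (List ℕ)} (hG : Goodsh T) {i j : ℕ} (hij : j < LL T i) :
    ∃ k, k < T.flatten.length ∧ vacated (delta^[k] T) = (i, j) ∧
      LL (delta^[k] T) i = j + 1 := by
  classical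
  have hNpos : 0 < T.flatten.length := by
    have h1 := LL_le_flatten T i
    omega
  have hexists : ∃ k, LL (delta^[k] T) i ≤ j := by
    exact ⟨T.flatten.length, by rw [LL_iter_final hG]; omega⟩
  set k0 := Nat.find hexists with hk0
  have hspec : LL (delta^[k0] T) i ≤ j := Nat.find_spec hexists
  have hk0N : k0 ≤ T.flatten.length :=
    Nat.find_min' hexists (by rw [LL_iter_final hG]; omega)
  have hk0pos : 0 < k0 := by
    rcases Nat.eq_zero_or_pos k0 with h | h
    · rw [h] at hspec
      simp only [Function.iterate_zero_apply] at hspec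
      omega
    · exact h
  have hprev : ¬ LL (delta^[k0 - 1] T) i ≤ j := Nat.find_min hexists (by omega)
  have hstep := LL_iter_succ hG (k := k0 - 1) (by omega) i
  rw [show k0 - 1 + 1 = k0 by omega] at hstep
  have hveq : i = (vacated (delta^[k0 - 1] T)).1 := by
    by_contra hc
    rw [if_neg hc] at hstep
    omega
  have hcorner := vacated_corner_iter hG (k := k0 - 1) (by omega)
  rw [← hveq] at hcorner
  rw [if_pos hveq] at hstep
  refine ⟨k0 - 1, by omega, ?_, by omega⟩
  obtain ⟨hc1, hc2⟩ := hcorner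
  rw [Prod.ext_iff]
  exact ⟨hveq.symm, by show (vacated (delta^[k0 - 1] T)).2 = j; omega⟩

lemma vac_time_unique {T : List (List ℕ)} (hG : Goodsh T) {i j k k' : ℕ}
    (hk : k < T.flatten.length) (hk' : k' < T.flatten.length)
    (h : vacated (delta^[k] T) = (i, j)) (h' : vacated (delta^[k'] T) = (i, j)) :
    k = k' := by
  have key : ∀ m, m < T.flatten.length → vacated (delta^[m] T) = (i, j) →
      LL (delta^[m] T) i = j + 1 ∧ LL (delta^[m + 1] T) i = j := by
    intro m hm hv
    have hcorner := (vacated_corner_iter hG hm).1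
    rw [hv] at hcorner
    have hstep := LL_iter_succ hG hm i
    rw [hv, if_pos rfl] at hstep
    simp only [] at hcorner hstep
    constructor
    · omega
    · omega
  obtain ⟨ha1, ha2⟩ := key k hk h
  obtain ⟨hb1, hb2⟩ := key k' hk' h'
  rcases lt_trichotomy k k' with hc | hc | hc
  · have := LL_iter_anti hG i (show k + 1 ≤ k' by omega) (by omega)
    omega
  · exact hc
  · have := LL_iter_anti hG i (show k' + 1 ≤ k by omega) (by omega)
    omega

lemma find?_unique {α : Type*} {p : α → Bool} {l : List α} {x : α} (hx : x ∈ l)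
    (hpx : p x = true) (huniq : ∀ y ∈ l, p y = true → y = x) : l.find? p = some x := by
  have hsome : (l.find? p).isSome := List.find?_isSome.mpr ⟨x, hx, hpx⟩
  obtain ⟨y, hy⟩ := Option.isSome_iff_exists.mp hsome
  have h1 := List.find?_some hy
  have h2 := List.mem_of_find?_eq_some hy
  rw [hy, huniq y h2 h1]

lemma evacEntry_eq {T : List (List ℕ)} (hG : Goodsh T) {i j : ℕ} (hij : j < LL T i) :
    ∃ k, k < T.flatten.length ∧ vacated (delta^[k] T) = (i, j) ∧
      evacEntry T i j = T.flatten.length - k ∧ LL (delta^[k] T) i = j + 1 := by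
  obtain ⟨k, hk, hvk, hLk⟩ := vac_time_exists hG hij
  refine ⟨k, hk, hvk, ?_, hLk⟩
  have hfind : (List.range T.flatten.length).find?
      (fun m => decide (vacated (delta^[m] T) = (i, j))) = some k := by
    refine find?_unique (List.mem_range.mpr hk) (decide_eq_true hvk) ?_
    intro y hy hpy
    exact vac_time_unique hG (List.mem_range.mp hy) hk (of_decide_eq_true hpy) hvk
  unfold evacEntry
  rw [hfind]

lemma evacEntry_row_strict {T : List (List ℕ)} (hG : Goodsh T) {i j : ℕ}
    (h : j + 1 < LL T i) : evacEntry T i j < evacEntry T i (j + 1) := by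
  obtain ⟨k1, hk1, hv1, he1, hL1⟩ := evacEntry_eq hG (show j < LL T i by omega)
  obtain ⟨k2, hk2, hv2, he2, hL2⟩ := evacEntry_eq hG h
  have hlt : k2 < k1 := by
    by_contra hc
    push_neg at hc
    have := LL_iter_anti hG i hc (by omega)
    omega
  omega

lemma evacEntry_col_strict {T : List (List ℕ)} (hG : Goodsh T) {i j : ℕ}
    (h : j < LL T (i + 1)) : evacEntry T i j < evacEntry T (i + 1) j := by
  have hij : j < LL T i := lt_of_lt_of_le h (hG.1 i)
  obtain ⟨k1, hk1, hv1, he1, hL1⟩ := evacEntry_eq hG hij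
  obtain ⟨k2, hk2, hv2, he2, hL2⟩ := evacEntry_eq hG h
  have hcorner := (vacated_corner_iter hG hk1).2
  rw [hv1] at hcorner
  simp only [] at hcorner
  have hlt : k2 < k1 := by
    by_contra hc
    push_neg at hc
    have := LL_iter_anti hG (i + 1) hc (by omega)
    omega
  omega

lemma toListT_length (r c : ℕ) (P : ℕ → ℕ → ℕ) : (toListT r c P).length = r := by
  simp [toListT]

lemma toListT_LL (r c : ℕ) (P : ℕ → ℕ → ℕ) (i : ℕ) :
    LL (toListT r c P) i = if i < r then c else 0 := by
  unfold LL toListT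
  rw [getD_map_range]
  split <;> simp

lemma goodsh_toListT (r c : ℕ) (P : ℕ → ℕ → ℕ) (hc : 0 < c) : Goodsh (toListT r c P) := by
  constructor
  · intro i
    rw [toListT_LL, toListT_LL]
    split_ifs <;> omega
  · intro i hi
    rw [toListT_length] at hi
    rw [toListT_LL, if_pos hi]
    exact hc

lemma entryL_evacL {T : List (List ℕ)} {i j : ℕ} (hi : i < T.length) (hj : j < LL T i) :
    entryL (evacL T) i j = evacEntry T i j := by
  unfold entryL evacL
  rw [getD_map_range, if_pos hi, getD_map_range]
  exact if_pos hj

lemma chainlt {g : ℕ → ℕ} {B : ℕ} (h : ∀ a, a + 1 < B → g a < g (a + 1)) :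
    ∀ a a', a < a' → a' < B → g a < g a' := by
  intro a a'
  induction a' with
  | zero => intro h1 _; omega
  | succ n ih =>
    intro h1 h2
    rcases Nat.lt_or_ge a n with hh | hh
    · exact lt_trans (ih hh (by omega)) (h n h2)
    · have han : a = n := by omega
      subst han
      exact h a h2

lemma x_lt_col {r c : ℕ} {Q : ℕ → ℕ → ℕ} (hQ : IsSYT r c Q) {s s' j : ℕ}
    (h1 : 1 ≤ s) (h2 : s < s') (h3 : s' ≤ r) (h4 : 1 ≤ j) (h5 : j ≤ c) :
    xEnt Q s j < xEnt Q s' j := by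
  have := chainlt (g := fun a => Q a (j - 1)) (B := r)
    (fun a ha => hQ.2.1 a (j - 1) ha (by omega)) (s - 1) (s' - 1) (by omega) (by omega)
  unfold xEnt
  exact_mod_cast this

lemma x_lt_row {r c : ℕ} {Q : ℕ → ℕ → ℕ} (hQ : IsSYT r c Q) {s j j' : ℕ}
    (h1 : 1 ≤ s) (h2 : s ≤ r) (h3 : 1 ≤ j) (h4 : j < j') (h5 : j' ≤ c) :
    xEnt Q s j < xEnt Q s j' := by
  have := chainlt (g := fun b => Q (s - 1) b) (B := c)
    (fun b hb => hQ.1 (s - 1) b (by omega) hb) (j - 1) (j' - 1) (by omega) (by omega)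
  unfold xEnt
  exact_mod_cast this

lemma y_lt_col {r c : ℕ} (P : ℕ → ℕ → ℕ) (hc : 0 < c) {t t' j : ℕ}
    (h1 : 1 ≤ t) (h2 : t < t') (h3 : t' ≤ r) (h4 : 1 ≤ j) (h5 : j ≤ c) :
    yEnt r c P t j < yEnt r c P t' j := by
  have hG := goodsh_toListT r c P hc
  have key : ∀ a, a + 1 < r →
      entryL (evacL (toListT r c P)) a (j - 1) < entryL (evacL (toListT r c P)) (a + 1) (j - 1) := by
    intro a ha
    rw [entryL_evacL (by rw [toListT_length]; omega) (by rw [toListT_LL, if_pos (by omega)]; omega),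
      entryL_evacL (by rw [toListT_length]; omega) (by rw [toListT_LL, if_pos (by omega)]; omega)]
    exact evacEntry_col_strict hG (by rw [toListT_LL, if_pos (by omega)]; omega)
  have := chainlt (g := fun a => entryL (evacL (toListT r c P)) a (j - 1)) (B := r)
    key (t - 1) (t' - 1) (by omega) (by omega)
  unfold yEnt
  exact_mod_cast this

lemma y_lt_row {r c : ℕ} (P : ℕ → ℕ → ℕ) (hc : 0 < c) {t j j' : ℕ}
    (h1 : 1 ≤ t) (h2 : t ≤ r) (h3 : 1 ≤ j) (h4 : j < j') (h5 : j' ≤ c) :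
    yEnt r c P t j < yEnt r c P t j' := by
  have hG := goodsh_toListT r c P hc
  have key : ∀ b, b + 1 < c →
      entryL (evacL (toListT r c P)) (t - 1) b < entryL (evacL (toListT r c P)) (t - 1) (b + 1) := by
    intro b hb
    rw [entryL_evacL (by rw [toListT_length]; omega) (by rw [toListT_LL, if_pos (by omega)]; omega),
      entryL_evacL (by rw [toListT_length]; omega) (by rw [toListT_LL, if_pos (by omega)]; omega)]
    exact evacEntry_row_strict hG (by rw [toListT_LL, if_pos (by omega)]; omega)
  have := chainlt (g := fun b => entryL (evacL (toListT r c P)) (t - 1) b) (B := c)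
    key (j - 1) (j' - 1) (by omega) (by omega)
  unfold yEnt
  exact_mod_cast this

/-! ### Abstract shadow-line computation for families of antichain lines -/

/-- Point family: `A` points per line, `J` lines. -/
def famSet (pt : ℕ → ℕ → ℤ × ℤ) (A J : ℕ) : Set (ℤ × ℤ) :=
  {q | ∃ a, a < A ∧ ∃ l, l < J ∧ q = pt a l}

def lineSet (pt : ℕ → ℕ → ℤ × ℤ) (A : ℕ) (l : ℕ) : Set (ℤ × ℤ) :=
  {q | ∃ a, a < A ∧ q = pt a l}

def restSet (pt : ℕ → ℕ → ℤ × ℤ) (A J m : ℕ) : Set (ℤ × ℤ) :=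
  {q | ∃ a, a < A ∧ ∃ l, m ≤ l ∧ l < J ∧ q = pt a l}

/-- Hypotheses: each line is strictly increasing in `x`, strictly decreasing in `y`;
no point of a later line is NE-below a point of an earlier line; every point of a later
line strictly NE-dominates a point of the previous line. -/
def Hyps (pt : ℕ → ℕ → ℤ × ℤ) (A J : ℕ) : Prop :=
  (∀ l a a', l < J → a < a' → a' < A → (pt a l).1 < (pt a' l).1) ∧
  (∀ l a a', l < J → a < a' → a' < A → (pt a' l).2 < (pt a l).2) ∧
  (∀ l l' a a', l < l' → l' < J → a < A → a' < A → ¬ dirNE (pt a' l') (pt a l)) ∧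
  (∀ l a, l + 1 < J → a < A →
    ∃ b, b < A ∧ (pt b l).1 < (pt a (l + 1)).1 ∧ (pt b l).2 < (pt a (l + 1)).2)

lemma minimals_rest (pt : ℕ → ℕ → ℤ × ℤ) (A J : ℕ) (h : Hyps pt A J) {m : ℕ} (hm : m < J) :
    minimalsUnder dirNE (restSet pt A J m) = lineSet pt A m := by
  obtain ⟨H1x, H1y, H3, H2⟩ := h
  ext q
  constructor
  · rintro ⟨⟨a, ha, l, hml, hlJ, rfl⟩, hmin⟩
    rcases eq_or_lt_of_le hml with h | h
    · exact ⟨a, ha, by rw [h]⟩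
    · obtain ⟨b, hb, hb1, hb2⟩ := H2 (l - 1) a (by omega) ha
      have hl1 : l - 1 + 1 = l := by omega
      rw [hl1] at hb1 hb2
      have hmem : pt b (l - 1) ∈ restSet pt A J m := ⟨b, hb, l - 1, by omega, by omega, rfl⟩
      have heq := hmin _ hmem ⟨le_of_lt hb1, le_of_lt hb2⟩
      rw [heq] at hb1
      exact absurd hb1 (lt_irrefl _)
  · rintro ⟨a, ha, rfl⟩
    refine ⟨⟨a, ha, m, le_rfl, hm, rfl⟩, ?_⟩
    rintro q ⟨a', ha', l', hml', hl'J, rfl⟩ hd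
    rcases eq_or_lt_of_le hml' with h | h
    · subst h
      rcases lt_trichotomy a' a with hc | hc | hc
      · have := H1y m a' a hm hc ha
        exact absurd hd.2 (not_le.mpr this)
      · rw [hc]
      · have := H1x m a a' hm hc ha'
        exact absurd hd.1 (not_le.mpr this)
    · exact absurd hd (H3 m l' a a' h hl'J ha ha')

lemma rest_eq (pt : ℕ → ℕ → ℤ × ℤ) (A J : ℕ) (h : Hyps pt A J) :
    ∀ m, shadowRest dirNE (famSet pt A J) m = restSet pt A J m := by
  intro m
  induction m with
  | zero =>
    show famSet pt A J = restSet pt A J 0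
    ext q
    constructor
    · rintro ⟨a, ha, l, hl, rfl⟩
      exact ⟨a, ha, l, Nat.zero_le l, hl, rfl⟩
    · rintro ⟨a, ha, l, _, hl, rfl⟩
      exact ⟨a, ha, l, hl, rfl⟩
  | succ m ih =>
    show shadowRest dirNE (famSet pt A J) m \
        minimalsUnder dirNE (shadowRest dirNE (famSet pt A J) m) = _
    rw [ih]
    by_cases hm : m < J
    · rw [minimals_rest pt A J h hm]
      obtain ⟨H1x, H1y, H3, H2⟩ := h
      ext q
      constructor
      · rintro ⟨⟨a, ha, l, hml, hlJ, rfl⟩, hnot⟩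
        have hlm : l ≠ m := by
          intro hh
          exact hnot ⟨a, ha, by rw [hh]⟩
        exact ⟨a, ha, l, by omega, hlJ, rfl⟩
      · rintro ⟨a, ha, l, hml, hlJ, rfl⟩
        refine ⟨⟨a, ha, l, by omega, hlJ, rfl⟩, ?_⟩
        rintro ⟨a', ha', heq⟩
        have hno := H3 m l a' a (by omega) hlJ ha' ha
        exact hno (by rw [heq]; exact ⟨le_rfl, le_rfl⟩)
    · have h1 : restSet pt A J m = ∅ := by
        rw [Set.eq_empty_iff_forall_notMem]
        rintro q ⟨a, ha, l, hml, hlJ, rfl⟩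
        omega
      have h2 : restSet pt A J (m + 1) = ∅ := by
        rw [Set.eq_empty_iff_forall_notMem]
        rintro q ⟨a, ha, l, hml, hlJ, rfl⟩
        omega
      rw [h1, h2]
      simp

lemma minimals_empty (d : ℤ × ℤ → ℤ × ℤ → Prop) : minimalsUnder d ∅ = ∅ := by
  rw [Set.eq_empty_iff_forall_notMem]
  rintro q ⟨hq, _⟩
  exact hq

lemma lineSkeleton_empty (d : ℤ × ℤ → ℤ × ℤ → Prop) : lineSkeleton d ∅ = ∅ := by
  unfold lineSkeleton
  have : {x : ℤ × ℤ | ∃ p ∈ (∅ : Set (ℤ × ℤ)), ∃ q ∈ (∅ : Set (ℤ × ℤ)),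
      p ≠ q ∧ d p x ∧ d q x} = ∅ := by
    rw [Set.eq_empty_iff_forall_notMem]
    rintro x ⟨p, hp, _⟩
    exact hp
  rw [this, minimals_empty]

lemma line_eq (pt : ℕ → ℕ → ℤ × ℤ) (A J : ℕ) (h : Hyps pt A J) (l : ℕ) :
    shadowLine dirNE (famSet pt A J) (l + 1) = if l < J then lineSet pt A l else ∅ := by
  show minimalsUnder dirNE (shadowRest dirNE (famSet pt A J) (l + 1 - 1)) = _
  rw [show l + 1 - 1 = l from rfl, rest_eq pt A J h l]
  split <;> rename_i hl
  · exact minimals_rest pt A J h hl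
  · have h1 : restSet pt A J l = ∅ := by
      rw [Set.eq_empty_iff_forall_notMem]
      rintro q ⟨a, ha, l', hml, hlJ, rfl⟩
      omega
    rw [h1, minimals_empty]

lemma lineSkeleton_lineSet (pt : ℕ → ℕ → ℤ × ℤ) (A J : ℕ) (h : Hyps pt A J) {l : ℕ}
    (hl : l < J) :
    lineSkeleton dirNE (lineSet pt A l) =
      {q | ∃ a, a + 1 < A ∧ q = ((pt (a + 1) l).1, (pt a l).2)} := by
  obtain ⟨H1x, H1y, H3, H2⟩ := h
  have hU : {x | ∃ u ∈ lineSet pt A l, ∃ v ∈ lineSet pt A l, u ≠ v ∧ dirNE u x ∧ dirNE v x} =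
      {x : ℤ × ℤ | ∃ a, a + 1 < A ∧ (pt (a + 1) l).1 ≤ x.1 ∧ (pt a l).2 ≤ x.2} := by
    ext x
    constructor
    · rintro ⟨u, ⟨a, ha, rfl⟩, v, ⟨b, hb, rfl⟩, hne, hu, hv⟩
      rcases lt_trichotomy a b with hab | hab | hab
      · refine ⟨a, by omega, ?_, hu.2⟩
        rcases eq_or_lt_of_le (show a + 1 ≤ b by omega) with hh | hh
        · rw [hh]; exact hv.1
        · exact le_trans (le_of_lt (H1x l (a + 1) b hl hh hb)) hv.1
      · exact absurd (by rw [hab]) hne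
      · refine ⟨b, by omega, ?_, hv.2⟩
        rcases eq_or_lt_of_le (show b + 1 ≤ a by omega) with hh | hh
        · rw [hh]; exact hu.1
        · exact le_trans (le_of_lt (H1x l (b + 1) a hl hh ha)) hu.1
    · rintro ⟨a, ha, h1, h2⟩
      refine ⟨pt a l, ⟨a, by omega, rfl⟩, pt (a + 1) l, ⟨a + 1, ha, rfl⟩, ?_, ⟨?_, h2⟩,
        ⟨h1, ?_⟩⟩
      · intro he
        have := H1x l a (a + 1) hl (by omega) ha
        rw [he] at this
        exact lt_irrefl _ this
      · exact le_trans (le_of_lt (H1x l a (a + 1) hl (by omega) ha)) h1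
      · exact le_trans (le_of_lt (H1y l a (a + 1) hl (by omega) ha)) h2
  unfold lineSkeleton
  rw [hU]
  ext q
  constructor
  · rintro ⟨⟨a, ha, h1, h2⟩, hmin⟩
    have hj : ((pt (a + 1) l).1, (pt a l).2) ∈
        {x : ℤ × ℤ | ∃ a, a + 1 < A ∧ (pt (a + 1) l).1 ≤ x.1 ∧ (pt a l).2 ≤ x.2} :=
      ⟨a, ha, le_rfl, le_rfl⟩
    have heq := hmin _ hj ⟨h1, h2⟩
    exact ⟨a, ha, heq.symm⟩
  · rintro ⟨a, ha, rfl⟩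
    refine ⟨⟨a, ha, le_rfl, le_rfl⟩, ?_⟩
    rintro y ⟨b, hb, hy1, hy2⟩ hd
    have hd1 : y.1 ≤ (pt (a + 1) l).1 := hd.1
    have hd2 : y.2 ≤ (pt a l).2 := hd.2
    have hba : b ≤ a := by
      by_contra hc
      push_neg at hc
      have := H1x l (a + 1) (b + 1) hl (by omega) hb
      omega
    have hab : a ≤ b := by
      by_contra hc
      push_neg at hc
      have := H1y l b a hl hc (by omega)
      omega
    have hBA : a = b := le_antisymm hab hba
    subst hBA
    have e1 : y.1 = (pt (a + 1) l).1 := le_antisymm hd1 hy1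
    have e2 : y.2 = (pt a l).2 := le_antisymm hd2 hy2
    rw [Prod.ext_iff]
    exact ⟨e1, e2⟩

lemma skeleton_famSet (pt : ℕ → ℕ → ℤ × ℤ) (A J : ℕ) (h : Hyps pt A J) :
    skeleton dirNE (famSet pt A J) =
      {q | ∃ a, a + 1 < A ∧ ∃ l, l < J ∧ q = ((pt (a + 1) l).1, (pt a l).2)} := by
  unfold skeleton
  ext q
  simp only [Set.mem_iUnion]
  constructor
  · rintro ⟨l, hq⟩
    rw [line_eq pt A J h l] at hq
    split at hq <;> rename_i hlJ
    · rw [lineSkeleton_lineSet pt A J h hlJ] at hq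
      obtain ⟨a, ha, rfl⟩ := hq
      exact ⟨a, ha, l, hlJ, rfl⟩
    · rw [lineSkeleton_empty] at hq
      exact absurd hq (Set.notMem_empty q)
  · rintro ⟨a, ha, l, hlJ, rfl⟩
    refine ⟨l, ?_⟩
    rw [line_eq pt A J h l, if_pos hlJ, lineSkeleton_lineSet pt A J h hlJ]
    exact ⟨a, ha, rfl⟩

/-! ### Transport between `dirSW` and `dirNE` via negation -/

def negp (q : ℤ × ℤ) : ℤ × ℤ := (-q.1, -q.2)

lemma negp_negp (q : ℤ × ℤ) : negp (negp q) = q := by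
  simp [negp]

lemma negp_inj : Function.Injective negp := by
  intro a b h
  have := congrArg negp h
  rwa [negp_negp, negp_negp] at this

lemma negp_image_image (S : Set (ℤ × ℤ)) : negp '' (negp '' S) = S := by
  rw [← Set.image_comp]
  have : negp ∘ negp = id := by
    funext q
    exact negp_negp q
  rw [this, Set.image_id]

lemma dirSW_iff_NE (a b : ℤ × ℤ) : dirSW a b ↔ dirNE (negp a) (negp b) := by
  unfold dirSW dirNE negp
  constructor <;> rintro ⟨h1, h2⟩ <;> exact ⟨by omega, by omega⟩

lemma minimals_negp (S : Set (ℤ × ℤ)) :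
    minimalsUnder dirSW S = negp '' minimalsUnder dirNE (negp '' S) := by
  ext q
  constructor
  · rintro ⟨hq, hmin⟩
    refine ⟨negp q, ⟨⟨q, hq, rfl⟩, ?_⟩, negp_negp q⟩
    rintro y ⟨z, hz, rfl⟩ hd
    rw [hmin z hz ((dirSW_iff_NE z q).mpr hd)]
  · rintro ⟨x, ⟨⟨z, hz, rfl⟩, hmin⟩, rfl⟩
    rw [negp_negp]
    refine ⟨hz, ?_⟩
    intro y hy hd
    have h1 := hmin (negp y) ⟨y, hy, rfl⟩ ((dirSW_iff_NE y z).mp hd)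
    have h2 := congrArg negp h1
    rwa [negp_negp, negp_negp] at h2

lemma shadowRest_negp (S : Set (ℤ × ℤ)) (m : ℕ) :
    shadowRest dirSW S m = negp '' shadowRest dirNE (negp '' S) m := by
  induction m with
  | zero =>
    show S = negp '' (negp '' S)
    rw [negp_image_image]
  | succ n ih =>
    show shadowRest dirSW S n \ minimalsUnder dirSW (shadowRest dirSW S n) = _
    rw [ih, minimals_negp, negp_image_image, ← Set.image_diff negp_inj]
    rfl

lemma shadowLine_negp (S : Set (ℤ × ℤ)) (j : ℕ) :
    shadowLine dirSW S j = negp '' shadowLine dirNE (negp '' S) j := by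
  show minimalsUnder dirSW (shadowRest dirSW S (j - 1)) = _
  rw [shadowRest_negp, minimals_negp, negp_image_image]
  rfl

lemma lineSkeleton_negp (L : Set (ℤ × ℤ)) :
    lineSkeleton dirSW L = negp '' lineSkeleton dirNE (negp '' L) := by
  unfold lineSkeleton
  rw [minimals_negp]
  have hU : negp '' {x | ∃ p ∈ L, ∃ q ∈ L, p ≠ q ∧ dirSW p x ∧ dirSW q x} =
      {x | ∃ p ∈ negp '' L, ∃ q ∈ negp '' L, p ≠ q ∧ dirNE p x ∧ dirNE q x} := by
    ext x
    constructor
    · rintro ⟨y, ⟨u, hu, v, hv, hne, h1, h2⟩, rfl⟩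
      exact ⟨negp u, ⟨u, hu, rfl⟩, negp v, ⟨v, hv, rfl⟩, fun hh => hne (negp_inj hh),
        (dirSW_iff_NE u y).mp h1, (dirSW_iff_NE v y).mp h2⟩
    · rintro ⟨u, ⟨u', hu, rfl⟩, v, ⟨v', hv, rfl⟩, hne, h1, h2⟩
      refine ⟨negp x, ⟨u', hu, v', hv, fun hh => hne (by rw [hh]), ?_, ?_⟩, negp_negp x⟩
      · rw [dirSW_iff_NE, negp_negp]
        exact h1
      · rw [dirSW_iff_NE, negp_negp]
        exact h2
  rw [hU]

lemma skeleton_negp (S : Set (ℤ × ℤ)) :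
    skeleton dirSW S = negp '' skeleton dirNE (negp '' S) := by
  unfold skeleton
  rw [Set.image_iUnion]
  refine Set.iUnion_congr fun j => ?_
  rw [shadowLine_negp, lineSkeleton_negp, negp_image_image]

/-! ### Degenerate cases -/

lemma skeleton_empty_set (d : ℤ × ℤ → ℤ × ℤ → Prop) : skeleton d ∅ = ∅ := by
  have hrest : ∀ m, shadowRest d ∅ m = ∅ := by
    intro m
    induction m with
    | zero => rfl
    | succ n ih =>
      show shadowRest d ∅ n \ minimalsUnder d (shadowRest d ∅ n) = ∅
      rw [ih]
      simp
  unfold skeleton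
  rw [Set.eq_empty_iff_forall_notMem]
  intro q hq
  rw [Set.mem_iUnion] at hq
  obtain ⟨j, hq⟩ := hq
  have hline : shadowLine d ∅ (j + 1) = ∅ := by
    show minimalsUnder d (shadowRest d ∅ (j + 1 - 1)) = ∅
    rw [hrest, minimals_empty]
  rw [hline, lineSkeleton_empty] at hq
  exact hq

lemma Sk_empty_of {r c : ℕ} {P Q : ℕ → ℕ → ℕ} (h : r = 0 ∨ c = 0) (k : ℕ) :
    Sk r c P Q k = ∅ := by
  unfold Sk Skj
  rw [Set.eq_empty_iff_forall_notMem]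
  intro q hq
  rw [Set.mem_iUnion] at hq
  obtain ⟨j, hq⟩ := hq
  rw [Set.mem_iUnion] at hq
  obtain ⟨hj, hq⟩ := hq
  rw [Set.mem_Icc] at hj
  obtain ⟨s, t, hs1, hs2, ht1, ht2, hst, rfl⟩ := hq
  omega

/-! ### The concrete point families -/

lemma mem_Sk {r c k : ℕ} {P Q : ℕ → ℕ → ℕ} {q : ℤ × ℤ} :
    q ∈ Sk r c P Q k ↔ ∃ j s t, 1 ≤ j ∧ j ≤ c ∧ 1 ≤ s ∧ s ≤ r ∧ 1 ≤ t ∧ t ≤ r ∧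
      s + t - 1 = k ∧ q = (xEnt Q s j, yEnt r c P t j) := by
  unfold Sk Skj
  simp only [Set.mem_iUnion, Set.mem_Icc, Set.mem_setOf_eq, exists_prop]
  constructor
  · rintro ⟨j, ⟨hj1, hj2⟩, s, t, h1, h2, h3, h4, h5, h6⟩
    exact ⟨j, s, t, hj1, hj2, h1, h2, h3, h4, h5, h6⟩
  · rintro ⟨j, s, t, h1, h2, h3, h4, h5, h6, h7, h8⟩
    exact ⟨j, ⟨h1, h2⟩, s, t, h3, h4, h5, h6, h7, h8⟩

def ptNE (Q : ℕ → ℕ → ℕ) (r c : ℕ) (P : ℕ → ℕ → ℕ) (k a l : ℕ) : ℤ × ℤ :=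
  (xEnt Q (k + 1 - r + a) (l + 1), yEnt r c P (r - a) (l + 1))

def ptSW (Q : ℕ → ℕ → ℕ) (r c : ℕ) (P : ℕ → ℕ → ℕ) (k a l : ℕ) : ℤ × ℤ :=
  (-(xEnt Q (k - a) (c - l)), -(yEnt r c P (a + 1) (c - l)))

lemma Sk_eq_famNE {r c k : ℕ} {P Q : ℕ → ℕ → ℕ} (hrk : r ≤ k) :
    Sk r c P Q k = famSet (ptNE Q r c P k) (2 * r - k) c := by
  ext q
  rw [mem_Sk]
  constructor
  · rintro ⟨j, s, t, h1, h2, h3, h4, h5, h6, h7, h8⟩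
    refine ⟨s - (k + 1 - r), by omega, j - 1, by omega, ?_⟩
    show q = (xEnt Q (k + 1 - r + (s - (k + 1 - r))) (j - 1 + 1),
      yEnt r c P (r - (s - (k + 1 - r))) (j - 1 + 1))
    have e1 : k + 1 - r + (s - (k + 1 - r)) = s := by omega
    have e2 : r - (s - (k + 1 - r)) = t := by omega
    have e3 : j - 1 + 1 = j := by omega
    rw [e1, e2, e3]
    exact h8
  · rintro ⟨a, ha, l, hl, rfl⟩
    exact ⟨l + 1, k + 1 - r + a, r - a, by omega, by omega, by omega, by omega, by omega,
      by omega, by omega, rfl⟩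

lemma Sk_succ_eq_skelNE {r c k : ℕ} {P Q : ℕ → ℕ → ℕ} (hrk : r ≤ k) :
    Sk r c P Q (k + 1) =
      {q | ∃ a, a + 1 < 2 * r - k ∧ ∃ l, l < c ∧
        q = ((ptNE Q r c P k (a + 1) l).1, (ptNE Q r c P k a l).2)} := by
  ext q
  rw [mem_Sk]
  constructor
  · rintro ⟨j, s, t, h1, h2, h3, h4, h5, h6, h7, h8⟩
    refine ⟨s - (k + 2 - r), by omega, j - 1, by omega, ?_⟩
    show q = (xEnt Q (k + 1 - r + (s - (k + 2 - r) + 1)) (j - 1 + 1),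
      yEnt r c P (r - (s - (k + 2 - r))) (j - 1 + 1))
    have e1 : k + 1 - r + (s - (k + 2 - r) + 1) = s := by omega
    have e2 : r - (s - (k + 2 - r)) = t := by omega
    have e3 : j - 1 + 1 = j := by omega
    rw [e1, e2, e3]
    exact h8
  · rintro ⟨a, ha, l, hl, rfl⟩
    refine ⟨l + 1, k + 1 - r + (a + 1), r - a, by omega, by omega, by omega, by omega,
      by omega, by omega, by omega, rfl⟩

lemma hyps_ptNE {r c k : ℕ} {P Q : ℕ → ℕ → ℕ} (hQ : IsSYT r c Q) (hc : 0 < c)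
    (hrk : r ≤ k) : Hyps (ptNE Q r c P k) (2 * r - k) c := by
  refine ⟨?_, ?_, ?_, ?_⟩
  · intro l a a' hl haa ha'
    show xEnt Q (k + 1 - r + a) (l + 1) < xEnt Q (k + 1 - r + a') (l + 1)
    exact x_lt_col hQ (by omega) (by omega) (by omega) (by omega) (by omega)
  · intro l a a' hl haa ha'
    show yEnt r c P (r - a') (l + 1) < yEnt r c P (r - a) (l + 1)
    exact y_lt_col P hc (by omega) (by omega) (by omega) (by omega) (by omega)
  · intro l l' a a' hll' hl' ha ha' hd
    have hx : xEnt Q (k + 1 - r + a') (l' + 1) ≤ xEnt Q (k + 1 - r + a) (l + 1) := hd.1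
    have hy : yEnt r c P (r - a') (l' + 1) ≤ yEnt r c P (r - a) (l + 1) := hd.2
    rcases Nat.lt_or_ge a' a with hc1 | hc1
    · -- a' < a : t = r - a < t' = r - a'
      have h1 : yEnt r c P (r - a) (l + 1) < yEnt r c P (r - a') (l + 1) :=
        y_lt_col P hc (by omega) (by omega) (by omega) (by omega) (by omega)
      have h2 : yEnt r c P (r - a') (l + 1) < yEnt r c P (r - a') (l' + 1) :=
        y_lt_row P hc (by omega) (by omega) (by omega) (by omega) (by omega)
      omega
    · -- a ≤ a' : s ≤ s'
      have h1 : xEnt Q (k + 1 - r + a) (l + 1) < xEnt Q (k + 1 - r + a) (l' + 1) :=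
        x_lt_row hQ (by omega) (by omega) (by omega) (by omega) (by omega)
      have h2 : xEnt Q (k + 1 - r + a) (l' + 1) ≤ xEnt Q (k + 1 - r + a') (l' + 1) := by
        rcases Nat.eq_or_lt_of_le hc1 with he | hlt
        · rw [he]
        · exact le_of_lt (x_lt_col hQ (by omega) (by omega) (by omega) (by omega) (by omega))
      omega
  · intro l a hl ha
    refine ⟨a, ha, ?_, ?_⟩
    · show xEnt Q (k + 1 - r + a) (l + 1) < xEnt Q (k + 1 - r + a) (l + 1 + 1)
      exact x_lt_row hQ (by omega) (by omega) (by omega) (by omega) (by omega)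
    · show yEnt r c P (r - a) (l + 1) < yEnt r c P (r - a) (l + 1 + 1)
      exact y_lt_row P hc (by omega) (by omega) (by omega) (by omega) (by omega)

lemma negp_Sk_eq_famSW {r c k : ℕ} {P Q : ℕ → ℕ → ℕ} (hkr : k ≤ r) :
    negp '' Sk r c P Q k = famSet (ptSW Q r c P k) k c := by
  ext q
  constructor
  · rintro ⟨z, hz, rfl⟩
    rw [mem_Sk] at hz
    obtain ⟨j, s, t, h1, h2, h3, h4, h5, h6, h7, rfl⟩ := hz
    refine ⟨t - 1, by omega, c - j, by omega, ?_⟩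
    show negp (xEnt Q s j, yEnt r c P t j) =
      (-(xEnt Q (k - (t - 1)) (c - (c - j))), -(yEnt r c P (t - 1 + 1) (c - (c - j))))
    have e1 : k - (t - 1) = s := by omega
    have e2 : t - 1 + 1 = t := by omega
    have e3 : c - (c - j) = j := by omega
    rw [e1, e2, e3]
    rfl
  · rintro ⟨a, ha, l, hl, rfl⟩
    refine ⟨(xEnt Q (k - a) (c - l), yEnt r c P (a + 1) (c - l)), ?_, rfl⟩
    rw [mem_Sk]
    exact ⟨c - l, k - a, a + 1, by omega, by omega, by omega, by omega, by omega, by omega,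
      by omega, rfl⟩

lemma hyps_ptSW {r c k : ℕ} {P Q : ℕ → ℕ → ℕ} (hQ : IsSYT r c Q) (hc : 0 < c)
    (hkr : k ≤ r) : Hyps (ptSW Q r c P k) k c := by
  refine ⟨?_, ?_, ?_, ?_⟩
  · intro l a a' hl haa ha'
    show -(xEnt Q (k - a) (c - l)) < -(xEnt Q (k - a') (c - l))
    have : xEnt Q (k - a') (c - l) < xEnt Q (k - a) (c - l) :=
      x_lt_col hQ (by omega) (by omega) (by omega) (by omega) (by omega)
    omega
  · intro l a a' hl haa ha'
    show -(yEnt r c P (a' + 1) (c - l)) < -(yEnt r c P (a + 1) (c - l))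
    have : yEnt r c P (a + 1) (c - l) < yEnt r c P (a' + 1) (c - l) :=
      y_lt_col P hc (by omega) (by omega) (by omega) (by omega) (by omega)
    omega
  · intro l l' a a' hll' hl' ha ha' hd
    have hx : -(xEnt Q (k - a') (c - l')) ≤ -(xEnt Q (k - a) (c - l)) := hd.1
    have hy : -(yEnt r c P (a' + 1) (c - l')) ≤ -(yEnt r c P (a + 1) (c - l)) := hd.2
    rcases Nat.lt_or_ge a' a with hc1 | hc1
    · -- a' < a : t' = a' + 1 < t = a + 1
      have h1 : yEnt r c P (a' + 1) (c - l') < yEnt r c P (a + 1) (c - l') :=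
        y_lt_col P hc (by omega) (by omega) (by omega) (by omega) (by omega)
      have h2 : yEnt r c P (a + 1) (c - l') < yEnt r c P (a + 1) (c - l) :=
        y_lt_row P hc (by omega) (by omega) (by omega) (by omega) (by omega)
      omega
    · -- a ≤ a' : s' = k - a' ≤ s = k - a
      have h1 : xEnt Q (k - a) (c - l') < xEnt Q (k - a) (c - l) :=
        x_lt_row hQ (by omega) (by omega) (by omega) (by omega) (by omega)
      have h2 : xEnt Q (k - a') (c - l') ≤ xEnt Q (k - a) (c - l') := by
        rcases Nat.eq_or_lt_of_le hc1 with he | hlt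
        · rw [he]
        · exact le_of_lt (x_lt_col hQ (by omega) (by omega) (by omega) (by omega) (by omega))
      omega
  · intro l a hl ha
    refine ⟨a, ha, ?_, ?_⟩
    · show -(xEnt Q (k - a) (c - l)) < -(xEnt Q (k - a) (c - (l + 1)))
      have : xEnt Q (k - a) (c - (l + 1)) < xEnt Q (k - a) (c - l) :=
        x_lt_row hQ (by omega) (by omega) (by omega) (by omega) (by omega)
      omega
    · show -(yEnt r c P (a + 1) (c - l)) < -(yEnt r c P (a + 1) (c - (l + 1)))
      have : yEnt r c P (a + 1) (c - (l + 1)) < yEnt r c P (a + 1) (c - l) :=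
        y_lt_row P hc (by omega) (by omega) (by omega) (by omega) (by omega)
      omega

lemma negp_skelSW_eq {r c k : ℕ} {P Q : ℕ → ℕ → ℕ} (hkr : k ≤ r) (h1k : 1 ≤ k) :
    negp '' {q | ∃ a, a + 1 < k ∧ ∃ l, l < c ∧
        q = ((ptSW Q r c P k (a + 1) l).1, (ptSW Q r c P k a l).2)} =
      Sk r c P Q (k - 1) := by
  ext q
  constructor
  · rintro ⟨z, ⟨a, ha, l, hl, rfl⟩, rfl⟩
    rw [mem_Sk]
    refine ⟨c - l, k - (a + 1), a + 1, by omega, by omega, by omega, by omega, by omega,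
      by omega, by omega, ?_⟩
    show negp (-(xEnt Q (k - (a + 1)) (c - l)), -(yEnt r c P (a + 1) (c - l))) = _
    unfold negp
    rw [Prod.ext_iff]
    constructor
    · show -(-(xEnt Q (k - (a + 1)) (c - l))) = xEnt Q (k - (a + 1)) (c - l)
      omega
    · show -(-(yEnt r c P (a + 1) (c - l))) = yEnt r c P (a + 1) (c - l)
      omega
  · intro hq
    rw [mem_Sk] at hq
    obtain ⟨j, s, t, h1, h2, h3, h4, h5, h6, h7, rfl⟩ := hq
    refine ⟨(-(xEnt Q s j), -(yEnt r c P t j)), ⟨t - 1, by omega, c - j, by omega, ?_⟩, ?_⟩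
    · show (-(xEnt Q s j), -(yEnt r c P t j)) =
        (-(xEnt Q (k - (t - 1 + 1)) (c - (c - j))), -(yEnt r c P (t - 1 + 1) (c - (c - j))))
      have e1 : k - (t - 1 + 1) = s := by omega
      have e2 : t - 1 + 1 = t := by omega
      have e3 : c - (c - j) = j := by omega
      rw [e1, e2, e3]
    · show negp (-(xEnt Q s j), -(yEnt r c P t j)) = _
      unfold negp
      rw [Prod.ext_iff]
      constructor
      · show -(-(xEnt Q s j)) = xEnt Q s j
        omega
      · show -(-(yEnt r c P t j)) = yEnt r c P t j
        omega
/-- For `P, Q ∈ SYT(r × c)` and the point sets `S_k` built from entries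
of `Q` and `∂(P)` (with `S_0 = S_{2r} = ∅`): for `r ≤ k ≤ 2r - 1` the skeleton satisfies
`𝒮(S_k, ↗) = S_{k+1}`, and for `1 ≤ k ≤ r` the skeleton satisfies `𝒮(S_k, ↙) = S_{k-1}`. -/
theorem skeleton_Sk (r c : ℕ) (P Q : ℕ → ℕ → ℕ)
    (hP : IsSYT r c P) (hQ : IsSYT r c Q) (k : ℕ) :
    (r ≤ k → k ≤ 2 * r - 1 →
      skeleton dirNE (Sk r c P Q k) = Sk r c P Q (k + 1)) ∧
    (1 ≤ k → k ≤ r →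
      skeleton dirSW (Sk r c P Q k) = Sk r c P Q (k - 1)) := by
  constructor
  · intro hrk _hk2r
    by_cases hc : 0 < c
    · rw [Sk_eq_famNE hrk,
        skeleton_famSet (ptNE Q r c P k) (2 * r - k) c (hyps_ptNE hQ hc hrk)]
      exact (Sk_succ_eq_skelNE hrk).symm
    · rw [Sk_empty_of (Or.inr (by omega)) k, Sk_empty_of (Or.inr (by omega)) (k + 1),
        skeleton_empty_set]
  · intro h1k hkr
    by_cases hc : 0 < c
    · rw [skeleton_negp, negp_Sk_eq_famSW hkr,
        skeleton_famSet (ptSW Q r c P k) k c (hyps_ptSW hQ hc hkr)]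
      exact negp_skelSW_eq hkr h1k
    · rw [Sk_empty_of (Or.inr (by omega)) k, Sk_empty_of (Or.inr (by omega)) (k - 1),
        skeleton_empty_set]

end PromRS
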